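/- The palindromic width of a free abelian group of rank n with respect to a basis is equal to n. -/
import Mathlib


/-- Evaluation of a word in the alphabet `X ∪ X⁻¹` (a letter is a generator
index together with a sign) in the free abelian group `ℤⁿ`, where the
generator `i` is the standard basis vector `eᵢ`. -/
def evalZn (n : ℕ) (w : List (Fin n × Bool)) : Fin n → ℤ :=
  (w.map (fun p => if p.2 then Pi.single p.1 (1 : ℤ) else -Pi.single p.1 (1 : ℤ))).sum

/-- A word is a palindrome if it reads the same forwards and backwards. -/
def IsPalindromeWord {n : ℕ} (w : List (Fin n × Bool)) : Prop := w.reverse = w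

lemma evalZn_cons (n : ℕ) (p : Fin n × Bool) (w : List (Fin n × Bool)) :
    evalZn n (p :: w) =
      (if p.2 then Pi.single p.1 (1 : ℤ) else -Pi.single p.1 (1 : ℤ)) + evalZn n w := by
  simp [evalZn]

lemma evalZn_append (n : ℕ) (u v : List (Fin n × Bool)) :
    evalZn n (u ++ v) = evalZn n u + evalZn n v := by
  simp [evalZn]

/-- The set of coordinates where `g` is odd. -/
def oddsOf (n : ℕ) (g : Fin n → ℤ) : Finset (Fin n) :=
  Finset.univ.filter fun i => Odd (g i)

lemma odds_pal {n : ℕ} {w : List (Fin n × Bool)} (h : IsPalindromeWord w) :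
    (oddsOf n (evalZn n w)).card ≤ 1 := by
  have hp : List.Palindrome w := List.Palindrome.of_reverse_eq h
  induction hp with
  | nil => simp [oddsOf, evalZn]
  | singleton a =>
    have hsub : oddsOf n (evalZn n [a]) ⊆ {a.1} := by
      intro i hi
      simp only [oddsOf, Finset.mem_filter, Finset.mem_univ, true_and] at hi
      simp only [Finset.mem_singleton]
      by_contra hne
      have hz : evalZn n [a] i = 0 := by
        simp only [evalZn, List.map_cons, List.map_nil, List.sum_cons, List.sum_nil, add_zero]
        split <;> simp [Pi.single_eq_of_ne hne]
      rw [hz] at hi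
      simp [Int.odd_iff] at hi
    calc (oddsOf n (evalZn n [a])).card ≤ ({a.1} : Finset (Fin n)).card :=
          Finset.card_le_card hsub
      _ = 1 := Finset.card_singleton _
  | @cons_concat a u hpu ih =>
    have heq : oddsOf n (evalZn n (a :: (u ++ [a]))) = oddsOf n (evalZn n u) := by
      ext i
      simp only [oddsOf, Finset.mem_filter, Finset.mem_univ, true_and]
      have key : ∀ x c : ℤ, Odd (c + (x + c)) ↔ Odd x := by
        intro x c; simp only [Int.odd_iff]; omega
      have h1 : evalZn n [a] i =
          (if a.2 then (Pi.single a.1 (1 : ℤ) : Fin n → ℤ)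
            else -(Pi.single a.1 (1 : ℤ) : Fin n → ℤ)) i := by
        simp [evalZn]
      rw [evalZn_cons, evalZn_append]
      simp only [Pi.add_apply, h1]
      exact key _ _
    rw [heq]; exact ih hpu.reverse_eq

lemma odds_sum_le {n : ℕ} (ws : List (List (Fin n × Bool)))
    (h : ∀ w ∈ ws, IsPalindromeWord w) :
    (oddsOf n ((ws.map (evalZn n)).sum)).card ≤ ws.length := by
  induction ws with
  | nil => simp [oddsOf]
  | cons w ws ih =>
    have hsub : oddsOf n ((List.map (evalZn n) (w :: ws)).sum) ⊆
        oddsOf n (evalZn n w) ∪ oddsOf n ((ws.map (evalZn n)).sum) := by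
      intro i hi
      simp only [oddsOf, Finset.mem_filter, Finset.mem_univ, true_and,
        Finset.mem_union, List.map_cons, List.sum_cons, Pi.add_apply] at hi ⊢
      by_contra hcon
      push_neg at hcon
      simp only [Int.odd_iff] at hi hcon
      omega
    calc (oddsOf n ((List.map (evalZn n) (w :: ws)).sum)).card
        ≤ (oddsOf n (evalZn n w) ∪ oddsOf n ((ws.map (evalZn n)).sum)).card :=
          Finset.card_le_card hsub
      _ ≤ (oddsOf n (evalZn n w)).card + (oddsOf n ((ws.map (evalZn n)).sum)).card :=
          Finset.card_union_le _ _
      _ ≤ 1 + ws.length := by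
          exact Nat.add_le_add (odds_pal (h w (by simp))) (ih fun v hv => h v (by simp [hv]))
      _ = (w :: ws).length := by simp [Nat.add_comm]

lemma evalZn_replicate (n : ℕ) (i : Fin n) (g : ℤ) :
    evalZn n (List.replicate g.natAbs (i, decide (0 ≤ g))) = Pi.single i g := by
  have : evalZn n (List.replicate g.natAbs (i, decide (0 ≤ g))) =
      g.natAbs • (if decide (0 ≤ g) then Pi.single i (1 : ℤ) else -Pi.single i (1 : ℤ)) := by
    simp [evalZn, List.map_replicate]
  rw [this]
  by_cases hg : 0 ≤ g
  · have hd : decide (0 ≤ g) = true := by simpa using hg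
    rw [hd, if_pos rfl]
    funext j
    by_cases hj : j = i
    · subst hj; simp; omega
    · simp [Pi.single_eq_of_ne hj]
  · have hd : decide (0 ≤ g) = false := by simpa using hg
    rw [hd]
    simp only [Bool.false_eq_true, if_false]
    funext j
    by_cases hj : j = i
    · subst hj
      simp [Int.natCast_natAbs, abs_of_nonpos (by omega : g ≤ 0)]
    · simp [Pi.single_eq_of_ne hj]

/-- The palindromic width of the free abelian group `ℤⁿ` with respect to the
standard basis is equal to `n`: every element is a product (sum) of at most `n`
palindromes, and some element is not a product of fewer than `n` palindromes. -/
theorem palindromic_width_free_abelian_eq_rank (n : ℕ) :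
    (∀ g : Fin n → ℤ, ∃ ws : List (List (Fin n × Bool)),
      ws.length ≤ n ∧ (∀ w ∈ ws, IsPalindromeWord w) ∧ (ws.map (evalZn n)).sum = g) ∧
    (∃ g : Fin n → ℤ, ¬ ∃ ws : List (List (Fin n × Bool)),
      ws.length < n ∧ (∀ w ∈ ws, IsPalindromeWord w) ∧ (ws.map (evalZn n)).sum = g) := by
  constructor
  · intro g
    refine ⟨List.ofFn (fun i : Fin n => List.replicate (g i).natAbs (i, decide (0 ≤ g i))),
      by simp, ?_, ?_⟩
    · intro w hw
      simp only [List.mem_ofFn] at hw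
      obtain ⟨i, rfl⟩ := hw
      simp [IsPalindromeWord, List.reverse_replicate]
    · rw [List.map_ofFn, List.sum_ofFn]
      funext j
      simp only [Function.comp, evalZn_replicate, Finset.sum_apply]
      rw [Finset.sum_eq_single j]
      · simp
      · intro i _ hij
        exact Pi.single_eq_of_ne (Ne.symm hij) _
      · simp
  · refine ⟨fun _ => 1, ?_⟩
    rintro ⟨ws, hlen, hpal, hsum⟩
    have h1 : oddsOf n ((ws.map (evalZn n)).sum) = Finset.univ := by
      rw [hsum]
      simp [oddsOf, Finset.filter_true_of_mem, odd_one]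
    have := odds_sum_le ws hpal
    rw [h1, Finset.card_univ, Fintype.card_fin] at this
    omega
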